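/- Let G be a finite group, p a prime, U a Sylow p-subgroup of G, and P a subgroup of G with N_G(U) ≤ P. Let g ∈ U and suppose that U is the unique Sylow p-subgroup of G containing g. Then g fixes exactly one left coset in the left-multiplication action of G on G/P, namely the coset P itself; in particular fix(g,G/P) = 1. -/

import Mathlib

/-- Lemma 4.2 (key step): let `U` be a Sylow `p`-subgroup of a finite group `G`, let `P`
be a subgroup containing `N_G(U)`, and let `g ∈ U` lie in a unique Sylow `p`-subgroup of
`G` (namely `U`). Then `g` fixes exactly one coset in `G/P`, namely `P` itself; in
particular `fix(g, G/P) = 1`. -/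
theorem fix_parabolic_eq_one {G : Type*} [Group G] [Finite G] (p : ℕ) (hp : p.Prime)
    (U : Sylow p G) (P : Subgroup G) (hNP : Subgroup.normalizer ((U : Subgroup G) : Set G) ≤ P)
    (g : G) (hg : g ∈ (U : Subgroup G))
    (huniq : ∀ Q : Sylow p G, g ∈ (Q : Subgroup G) → Q = U) :
    MulAction.fixedBy (G ⧸ P) g = {QuotientGroup.mk (1 : G)} ∧
      Nat.card (MulAction.fixedBy (G ⧸ P) g) = 1 := by
  haveI := Fact.mk hp
  have hUP : (U : Subgroup G) ≤ P := le_trans Subgroup.le_normalizer hNP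
  have key : MulAction.fixedBy (G ⧸ P) g = {QuotientGroup.mk (1 : G)} := by
    ext q
    induction q using QuotientGroup.induction_on with
    | H x =>
      simp only [MulAction.mem_fixedBy, Set.mem_singleton_iff]
      have hsmul : g • (QuotientGroup.mk x : G ⧸ P) = QuotientGroup.mk (g * x) := rfl
      rw [hsmul, QuotientGroup.eq, QuotientGroup.eq]
      constructor
      · intro hxP
        -- hxP : (g*x)⁻¹ * x ∈ P
        have hhP : x⁻¹ * g * x ∈ P := by
          have := P.inv_mem hxP
          simpa [mul_assoc] using this
        set h : G := x⁻¹ * g * x with hdef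
        obtain ⟨k, hk⟩ := U.2 ⟨g, hg⟩
        have hgk : g ^ p ^ k = 1 := by
          simpa [Subtype.ext_iff] using hk
        have hhk : h ^ p ^ k = 1 := by
          have : h = x⁻¹ * g * (x⁻¹)⁻¹ := by simp [hdef]
          rw [this, conj_pow, hgk]
          simp
        set hElt : ↥P := ⟨h, hhP⟩ with hEdef
        have hEk : hElt ^ p ^ k = 1 := Subtype.ext (by simpa using hhk)
        have hS0 : IsPGroup p (Subgroup.zpowers hElt) := by
          intro z
          obtain ⟨n, hn⟩ := Subgroup.mem_zpowers_iff.mp z.2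
          refine ⟨k, ?_⟩
          have hz : (z : ↥P) ^ p ^ k = 1 := by
            rw [← hn, ← zpow_natCast, ← zpow_mul, mul_comm, zpow_mul, zpow_natCast, hEk,
              one_zpow]
          exact Subtype.ext (by simpa using hz)
        obtain ⟨S, hS⟩ := hS0.exists_le_sylow
        obtain ⟨R, hR⟩ := (S.2.map P.subtype).exists_le_sylow
        have hhR : h ∈ (R : Subgroup G) :=
          hR ⟨⟨h, hhP⟩, hS (Subgroup.mem_zpowers hElt), rfl⟩
        have hgxR : g ∈ ((x • R : Sylow p G) : Subgroup G) := by
          rw [Sylow.coe_subgroup_smul, Subgroup.mem_pointwise_smul_iff_inv_smul_mem]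
          have he : (MulAut.conj x)⁻¹ • g = h := by
            simp [MulAut.smul_def, hdef, mul_assoc]
          rw [he]; exact hhR
        have hxR : x • R = U := huniq _ hgxR
        -- cardinalities
        have cS : Nat.card ((S : Subgroup ↥P).map P.subtype) = Nat.card (S : Subgroup ↥P) :=
          Nat.card_congr (Subgroup.equivMapOfInjective _ _ P.subtype_injective).toEquiv.symm
        have cSU : Nat.card (S : Subgroup ↥P) = Nat.card ((U.subtype hUP : Sylow p ↥P) : Subgroup ↥P) := by
          rw [S.card_eq_multiplicity, (U.subtype hUP).card_eq_multiplicity]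
        have cUsub : Nat.card ((U.subtype hUP : Sylow p ↥P) : Subgroup ↥P) = Nat.card (U : Subgroup G) := by
          rw [Sylow.coe_subtype]
          exact Nat.card_congr (Subgroup.subgroupOfEquivOfLe hUP).toEquiv
        have cRU : Nat.card (R : Subgroup G) = Nat.card (U : Subgroup G) := by
          rw [R.card_eq_multiplicity, U.card_eq_multiplicity]
        have hReq : (S : Subgroup ↥P).map P.subtype = (R : Subgroup G) :=
          Subgroup.eq_of_le_of_card_ge hR (by rw [cS, cSU, cUsub, cRU])
        have hRP : (R : Subgroup G) ≤ P := hReq ▸ Subgroup.map_subtype_le _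
        obtain ⟨y, hy⟩ := MulAction.exists_smul_eq ↥P (R.subtype hRP) (U.subtype hUP)
        rw [Sylow.smul_subtype] at hy
        have hyRU : (↑y : G) • R = U := Sylow.subtype_injective hy
        have hnorm : x * (↑y : G)⁻¹ ∈ Subgroup.normalizer ((U : Subgroup G) : Set G) := by
          refine (Sylow.smul_eq_iff_mem_normalizer (P := U)).mp ?_
          rw [mul_smul]
          have hRU : (↑y : G)⁻¹ • U = R := by rw [inv_smul_eq_iff, hyRU]
          rw [hRU, hxR]
        have hxP' : x ∈ P := by
          have : (x * (↑y : G)⁻¹) * (↑y : G) ∈ P := P.mul_mem (hNP hnorm) y.2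
          simpa using this
        simpa using hxP'
      · intro hx
        have hxP : x ∈ P := by simpa using hx
        have : x⁻¹ * g⁻¹ * x ∈ P :=
          P.mul_mem (P.mul_mem (P.inv_mem hxP) (P.inv_mem (hUP hg))) hxP
        simpa [mul_assoc] using this
  refine ⟨key, ?_⟩
  rw [key]
  simp
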